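/- Let r_1, r_2 ∈ [n] be distinct. For any σ_1 ∈ SC^{(r_1)} and σ_2 ∈ SC^{(r_2)}, the composition σ_1 ∘ σ_2 cannot be a permutation of {0,1}^n whose cycle decomposition consists of exactly one 3-cycle (all other points fixed), nor one whose cycle decomposition consists of exactly one 5-cycle (all other points fixed). -/

import Mathlib

open Equiv

/-- `x` with its `i`-th bit flipped. -/
def flipBit {n : ℕ} (i : Fin n) (x : Fin n → Bool) : Fin n → Bool :=
  Function.update x i (!x i)

/-- `SC i`: the set of `i`-concurrent controlled permutations (`i`-CCRBFs) of
the hypercube `{0,1}^n`: the `i`-th bit of every point is preserved, and the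
action on all other bits does not depend on the `i`-th bit. -/
def SC {n : ℕ} (i : Fin n) : Set (Perm (Fin n → Bool)) :=
  {σ | (∀ x, σ x i = x i) ∧ ∀ x, ∀ k, k ≠ i → σ x k = σ (flipBit i x) k}

/-- `AC i`: the set of concurrently even `i`-CCRBFs: those `σ ∈ SC i` whose
induced permutation of the face `{x | x i = false}` is even. -/
def AC {n : ℕ} (i : Fin n) : Set (Perm (Fin n → Bool)) :=
  {σ | σ ∈ SC i ∧ ∃ h : ∀ x : Fin n → Bool, x i = false ↔ σ x i = false,
    Perm.sign (σ.subtypePerm (p := fun x : Fin n → Bool => x i = false) fun x => (h x).symm) = 1}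

namespace Aux35

/-! ### Generic facts about involutions and cycles -/

section invol

variable {α : Type*} [DecidableEq α] [Fintype α]

omit [Fintype α] in
lemma even_card_of_invol (f : α → α) (hf : ∀ x, f (f x) = x) :
    ∀ T : Finset α, (∀ x ∈ T, f x ∈ T) → (∀ x ∈ T, f x ≠ x) → Even T.card := by
  intro T
  induction T using Finset.strongInduction with
  | _ T ih =>
    intro hmem hne
    rcases T.eq_empty_or_nonempty with rfl | ⟨x, hx⟩
    · simp
    have hfx : f x ∈ T := hmem x hx
    have hxne : f x ≠ x := hne x hx
    have hsub : ({x, f x} : Finset α) ⊆ T := by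
      intro y hy
      rcases Finset.mem_insert.1 hy with rfl | hy
      · exact hx
      · rw [Finset.mem_singleton.1 hy]; exact hfx
    have hss : T \ ({x, f x} : Finset α) ⊂ T :=
      Finset.sdiff_ssubset hsub ⟨x, by simp⟩
    have hmem' : ∀ y ∈ T \ ({x, f x} : Finset α), f y ∈ T \ ({x, f x} : Finset α) := by
      intro y hy
      rw [Finset.mem_sdiff] at hy ⊢
      obtain ⟨hyT, hyn⟩ := hy
      simp only [Finset.mem_insert, Finset.mem_singleton] at hyn
      push_neg at hyn
      refine ⟨hmem y hyT, ?_⟩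
      simp only [Finset.mem_insert, Finset.mem_singleton]
      push_neg
      constructor
      · intro h; exact hyn.2 (by rw [← hf y, h])
      · intro h
        apply hyn.1
        have := congrArg f h
        rwa [hf, hf] at this
    have hne' : ∀ y ∈ T \ ({x, f x} : Finset α), f y ≠ y :=
      fun y hy => hne y (Finset.mem_sdiff.1 hy).1
    have hE := ih _ hss hmem' hne'
    have h2 : ({x, f x} : Finset α).card = 2 := by
      rw [Finset.card_insert_of_notMem (by simpa using Ne.symm hxne), Finset.card_singleton]
    have hle := Finset.card_le_card hsub
    have hcard : T.card = (T \ ({x, f x} : Finset α)).card + 2 := by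
      rw [Finset.card_sdiff_of_subset hsub, h2]
      omega
    rw [Nat.even_iff] at hE ⊢
    omega

lemma bool_ne_eq_not {a b : Bool} (h : a ≠ b) : a = !b := by
  cases a <;> cases b <;> simp_all

lemma orbit_const {c : Perm α} (hc : c.IsCycle) {g : α → Bool}
    (h : ∀ x ∈ c.support, g (c x) = g x) :
    ∀ x ∈ c.support, ∀ y ∈ c.support, g x = g y := by
  intro x hx y hy
  obtain ⟨i, hi⟩ := hc.exists_pow_eq (Perm.mem_support.1 hx) (Perm.mem_support.1 hy)
  have key : ∀ j : ℕ, g ((c ^ j) x) = g x := by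
    intro j
    induction j with
    | zero => simp
    | succ j ihj =>
      rw [pow_succ', Perm.mul_apply, h _ (Perm.pow_apply_mem_support.2 hx), ihj]
  rw [← hi, key]

lemma walk {c : Perm α} (hc : c.IsCycle) (g : α → Bool) {p q : α}
    (hp : p ∈ c.support) (hq : q ∈ c.support) (hqp : q ≠ p)
    (hstep : ∀ x ∈ c.support, x ≠ p → x ≠ q → g (c x) = g x)
    (hbegin : g (c p) ≠ g p) : g q = !(g p) := by
  obtain ⟨i, hi⟩ := hc.exists_pow_eq (Perm.mem_support.1 hp) (Perm.mem_support.1 hq)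
  have hi0 : 0 < i := by
    rcases Nat.eq_zero_or_pos i with rfl | h
    · simp only [pow_zero, Perm.coe_one, id_eq] at hi
      exact absurd hi.symm hqp
    · exact h
  have H : ∃ m, 0 < m ∧ (c ^ m) p = q := ⟨i, hi0, hi⟩
  have hm0 : 0 < Nat.find H := (Nat.find_spec H).1
  have hmq : (c ^ Nat.find H) p = q := (Nat.find_spec H).2
  have claim : ∀ l, 0 < l → l ≤ Nat.find H → g ((c ^ l) p) = !(g p) := by
    intro l
    induction l with
    | zero => omega
    | succ j ihj =>
      intro _ hlm
      rcases Nat.eq_zero_or_pos j with rfl | hj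
      · rw [pow_one]
        exact bool_ne_eq_not hbegin
      · have hjm : j < Nat.find H := by omega
        have hy : (c ^ j) p ∈ c.support := Perm.pow_apply_mem_support.2 hp
        have hynq : (c ^ j) p ≠ q := fun h => Nat.find_min H hjm ⟨hj, h⟩
        have hynp : (c ^ j) p ≠ p := by
          intro h
          apply Nat.find_min H (show Nat.find H - j < Nat.find H by omega)
          refine ⟨by omega, ?_⟩
          have hrw : (c ^ (Nat.find H - j)) ((c ^ j) p) = q := by
            rw [← Perm.mul_apply, ← pow_add, Nat.sub_add_cancel (le_of_lt hjm)]
            exact hmq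
          rwa [h] at hrw
        rw [pow_succ', Perm.mul_apply, hstep _ hy hynp hynq, ihj hj (by omega)]
  have := claim (Nat.find H) hm0 le_rfl
  rwa [hmq] at this

end invol

/-! ### Basic facts about `flipBit` and `SC` -/

variable {n : ℕ}

lemma flip_self (i : Fin n) (x : Fin n → Bool) : flipBit i x i = !x i := by
  simp [flipBit]

lemma flip_ne {i k : Fin n} (h : k ≠ i) (x : Fin n → Bool) : flipBit i x k = x k := by
  simp [flipBit, Function.update_of_ne h]

lemma flip_flip (i : Fin n) (x : Fin n → Bool) : flipBit i (flipBit i x) = x := by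
  funext k
  by_cases h : k = i
  · subst h; rw [flip_self, flip_self]; simp
  · rw [flip_ne h, flip_ne h]

lemma flip_comm {i j : Fin n} (h : i ≠ j) (x : Fin n → Bool) :
    flipBit i (flipBit j x) = flipBit j (flipBit i x) := by
  funext k
  by_cases hki : k = i
  · subst hki
    rw [flip_self, flip_ne h, flip_ne h, flip_self]
  · by_cases hkj : k = j
    · subst hkj
      rw [flip_ne hki, flip_self, flip_self, flip_ne hki]
    · rw [flip_ne hki, flip_ne hkj, flip_ne hkj, flip_ne hki]

lemma flip_ne_self (i : Fin n) (x : Fin n → Bool) : flipBit i x ≠ x := by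
  intro h
  have := congrFun h i
  rw [flip_self] at this
  simp at this

lemma SC.bit {i : Fin n} {σ : Perm (Fin n → Bool)} (h : σ ∈ SC i) (x : Fin n → Bool) :
    σ x i = x i := h.1 x

lemma SC.comm {i : Fin n} {σ : Perm (Fin n → Bool)} (h : σ ∈ SC i) (x : Fin n → Bool) :
    σ (flipBit i x) = flipBit i (σ x) := by
  funext k
  by_cases hk : k = i
  · subst hk
    rw [h.1, flip_self, flip_self, h.1]
  · rw [flip_ne hk, ← h.2 x k hk]

lemma SC.invmem {i : Fin n} {σ : Perm (Fin n → Bool)} (h : σ ∈ SC i) : σ⁻¹ ∈ SC i := by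
  have hcomm : ∀ x, σ⁻¹ (flipBit i x) = flipBit i (σ⁻¹ x) := by
    intro x
    apply σ.injective
    rw [(Perm.eq_inv_iff_eq (f := σ)).mp rfl, SC.comm h, (Perm.eq_inv_iff_eq (f := σ)).mp rfl]
  constructor
  · intro x
    conv_rhs => rw [← (Perm.eq_inv_iff_eq (f := σ) (y := x)).mp rfl, h.1]
  · intro x k hk
    rw [hcomm, flip_ne hk]

lemma SC.invcomm {i : Fin n} {σ : Perm (Fin n → Bool)} (h : σ ∈ SC i) (x : Fin n → Bool) :
    σ⁻¹ (flipBit i x) = flipBit i (σ⁻¹ x) := SC.comm (SC.invmem h) x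

/-! ### The local rules R1 and R3 -/

/-- Rule R1: if the `s`-flip of `x` is fixed by `τ1 * τ2` then the product preserves
the `r`-th bit of `x`. -/
lemma keyR1 {r s : Fin n} (hrs : r ≠ s) {τ1 τ2 : Perm (Fin n → Bool)}
    (h1 : τ1 ∈ SC r) (h2 : τ2 ∈ SC s) (x : Fin n → Bool)
    (hfix : (τ1 * τ2) (flipBit s x) = flipBit s x) : (τ1 * τ2) x r = x r := by
  have e1 : τ1 (flipBit s (τ2 x)) = flipBit s x := by
    rw [← SC.comm h2]
    exact hfix
  have e2 := congrFun e1 r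
  rw [SC.bit h1, flip_ne hrs, flip_ne hrs] at e2
  rw [Perm.mul_apply, SC.bit h1, e2]

/-- Rule R3: a moved point whose `r`-flip and `s`-flip are both fixed must have its
`rs`-flip moved. -/
lemma keyR3 {r s : Fin n} (hrs : r ≠ s) {τ1 τ2 : Perm (Fin n → Bool)}
    (h1 : τ1 ∈ SC r) (h2 : τ2 ∈ SC s) (x : Fin n → Bool)
    (hx : (τ1 * τ2) x ≠ x)
    (hfr : (τ1 * τ2) (flipBit r x) = flipBit r x)
    (hfs : (τ1 * τ2) (flipBit s x) = flipBit s x)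
    (hfrs : (τ1 * τ2) (flipBit r (flipBit s x)) = flipBit r (flipBit s x)) : False := by
  set c := τ1 * τ2 with hc
  -- K z := c (flipBit s (c⁻¹ (flipBit s z))) equals τ1 (flipBit s (τ1⁻¹ (flipBit s z)))
  have hKeq : ∀ z, c (flipBit s (c⁻¹ (flipBit s z)))
      = τ1 (flipBit s (τ1⁻¹ (flipBit s z))) := by
    intro z
    rw [hc, mul_inv_rev, Perm.mul_apply, Perm.mul_apply,
      ← SC.invcomm h2, (Perm.eq_inv_iff_eq (f := τ2)).mp rfl]
  -- K is equivariant for the r-flip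
  have hKcomm : ∀ z, c (flipBit s (c⁻¹ (flipBit s (flipBit r z))))
      = flipBit r (c (flipBit s (c⁻¹ (flipBit s z)))) := by
    intro z
    rw [hKeq, hKeq, flip_comm (Ne.symm hrs) z, SC.invcomm h1,
      flip_comm (Ne.symm hrs) (τ1⁻¹ (flipBit s z)), SC.comm h1]
  have e := hKcomm x
  -- compute the left side: it is `flipBit r x`
  have hinv1 : c⁻¹ (flipBit s (flipBit r x)) = flipBit s (flipBit r x) := by
    rw [Perm.inv_eq_iff_eq]
    rw [flip_comm hrs] at hfrs
    exact hfrs.symm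
  have hinv2 : c⁻¹ (flipBit s x) = flipBit s x := by
    rw [Perm.inv_eq_iff_eq]
    exact hfs.symm
  rw [hinv1, flip_flip, hfr, hinv2, flip_flip] at e
  -- now e : flipBit r x = flipBit r (c x)
  have : x = c x := by
    have e2 := congrArg (flipBit r) e
    rwa [flip_flip, flip_flip] at e2
  exact hx this.symm

/-! ### Step 1: there are at least two `s`-flip pairs inside the support -/

lemma step1 {r s : Fin n} (hrs : r ≠ s) {c : Perm (Fin n → Bool)} (hc : c.IsCycle)
    (hcard : 3 ≤ c.support.card)
    (hR1 : ∀ x, c (flipBit s x) = flipBit s x → c x r = x r)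
    (hR3 : ∀ x ∈ c.support, flipBit r x ∉ c.support → flipBit s x ∉ c.support →
      flipBit r (flipBit s x) ∈ c.support) :
    3 ≤ (c.support.filter (fun x => flipBit s x ∈ c.support)).card := by
  by_contra hcon
  push_neg at hcon
  set S := c.support with hS
  set P2 := S.filter (fun x => flipBit s x ∈ S) with hP2
  have hP2sub : P2 ⊆ S := Finset.filter_subset _ _
  by_cases hconst : ∀ x ∈ S, c x r = x r
  · have const := orbit_const hc (g := fun z => z r) hconst
    have hex : ∃ x ∈ S, x ∉ P2 := by
      by_contra hno
      push_neg at hno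
      have hSP : S ⊆ P2 := fun y hy => hno y hy
      have := Finset.card_le_card hSP
      omega
    obtain ⟨x, hxS, hxP2⟩ := hex
    have hfs : flipBit s x ∉ S := by
      intro hmem
      exact hxP2 (Finset.mem_filter.2 ⟨hxS, hmem⟩)
    by_cases hfr : flipBit r x ∈ S
    · have := const x hxS _ hfr
      simp [flip_self] at this
    · have h3 := hR3 x hxS hfr hfs
      have := const x hxS _ h3
      simp [flip_self, flip_ne hrs] at this
  · push_neg at hconst
    obtain ⟨p, hp, hflip⟩ := hconst
    have hq : flipBit s p ∈ S := by
      by_contra hq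
      exact hflip (hR1 p (Perm.notMem_support.1 hq))
    have hpP2 : p ∈ P2 := Finset.mem_filter.2 ⟨hp, hq⟩
    have hqP2 : flipBit s p ∈ P2 := by
      refine Finset.mem_filter.2 ⟨hq, ?_⟩
      rw [flip_flip]
      exact hp
    have hP2eq : ∀ x ∈ P2, x = p ∨ x = flipBit s p := by
      intro x hxP2
      by_contra hx
      push_neg at hx
      have hins : ({x, p, flipBit s p} : Finset (Fin n → Bool)) ⊆ P2 := by
        intro y hy
        simp only [Finset.mem_insert, Finset.mem_singleton] at hy
        rcases hy with rfl | rfl | rfl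
        · exact hxP2
        · exact hpP2
        · exact hqP2
      have hcard3 : ({x, p, flipBit s p} : Finset (Fin n → Bool)).card = 3 := by
        rw [Finset.card_insert_of_notMem (by simp [hx.1, hx.2]),
          Finset.card_insert_of_notMem (by simp [Ne.symm (flip_ne_self s p)]),
          Finset.card_singleton]
      have := Finset.card_le_card hins
      omega
    have hstep : ∀ x ∈ S, x ≠ p → x ≠ flipBit s p → (fun z => z r) (c x) = (fun z => z r) x := by
      intro x hxS hxp hxq
      apply hR1
      apply Perm.notMem_support.1
      intro hmem
      rcases hP2eq x (Finset.mem_filter.2 ⟨hxS, hmem⟩) with h | h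
      · exact hxp h
      · exact hxq h
    have hwalk := walk hc (fun z => z r) hp hq (flip_ne_self s p) hstep hflip
    simp [flip_ne hrs] at hwalk



/-! ### The mask of a point: its bits outside `{r1, r2}` -/

def mask (r1 r2 : Fin n) (x : Fin n → Bool) : Fin n → Bool :=
  fun k => if k = r1 then false else if k = r2 then false else x k

lemma mask_flip1 (r1 r2 : Fin n) (x : Fin n → Bool) :
    mask r1 r2 (flipBit r1 x) = mask r1 r2 x := by
  funext k
  unfold mask
  by_cases h1 : k = r1
  · simp [h1]
  · by_cases h2 : k = r2
    · simp [h1, h2, flip_ne (h2 ▸ (by intro hc; exact h1 (h2 ▸ hc)) : k ≠ r1)]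
    · simp [h1, h2, flip_ne (h1 : k ≠ r1)]

lemma mask_flip2 (r1 r2 : Fin n) (x : Fin n → Bool) :
    mask r1 r2 (flipBit r2 x) = mask r1 r2 x := by
  funext k
  unfold mask
  by_cases h1 : k = r1
  · simp [h1]
  · by_cases h2 : k = r2
    · simp [h1, h2]
    · simp [h1, h2, flip_ne (h2 : k ≠ r2)]

lemma mask_inj {r1 r2 : Fin n} {x y : Fin n → Bool} (h : mask r1 r2 x = mask r1 r2 y)
    (h1 : x r1 = y r1) (h2 : x r2 = y r2) : x = y := by
  funext k
  by_cases hk1 : k = r1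
  · rw [hk1]; exact h1
  · by_cases hk2 : k = r2
    · rw [hk2]; exact h2
    · have := congrFun h k
      simpa [mask, hk1, hk2] using this

end Aux35

open Aux35 in
/-- The product of two concurrent controlled permutations in distinct
dimensions is never a single 3-cycle nor a single 5-cycle. -/
theorem no_single_35_cycle (n : ℕ) (r1 r2 : Fin n) (hr : r1 ≠ r2)
    (σ1 : Perm (Fin n → Bool)) (hσ1 : σ1 ∈ SC r1)
    (σ2 : Perm (Fin n → Bool)) (hσ2 : σ2 ∈ SC r2) :
    (σ1 * σ2).cycleType ≠ {3} ∧ (σ1 * σ2).cycleType ≠ {5} := by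
  suffices main : ∀ k : ℕ, k = 3 ∨ k = 5 → (σ1 * σ2).cycleType ≠ {k} by
    exact ⟨main 3 (Or.inl rfl), main 5 (Or.inr rfl)⟩
  intro k hk hcycT
  set c := σ1 * σ2 with hcdef
  have hc : c.IsCycle := by
    rw [← Perm.card_cycleType_eq_one, hcycT, Multiset.card_singleton]
  have hcard : c.support.card = k := by
    rw [← Perm.sum_cycleType, hcycT, Multiset.sum_singleton]
  have hcard3 : 3 ≤ c.support.card := by rcases hk with rfl | rfl <;> omega
  -- the local rules
  have hR1 : ∀ x, c (flipBit r2 x) = flipBit r2 x → c x r1 = x r1 :=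
    fun x h => keyR1 hr hσ1 hσ2 x h
  have hR1' : ∀ x, c⁻¹ (flipBit r1 x) = flipBit r1 x → c⁻¹ x r2 = x r2 := by
    intro x h
    have h2 : (σ2⁻¹ * σ1⁻¹) (flipBit r1 x) = flipBit r1 x := by
      rw [← mul_inv_rev]; exact h
    have := keyR1 (Ne.symm hr) (SC.invmem hσ2) (SC.invmem hσ1) x h2
    rwa [← mul_inv_rev] at this
  have hR3 : ∀ x ∈ c.support, flipBit r1 x ∉ c.support → flipBit r2 x ∉ c.support →
      flipBit r1 (flipBit r2 x) ∈ c.support := by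
    intro x hx h1 h2
    rw [Perm.mem_support]
    intro hcon
    exact keyR3 hr hσ1 hσ2 x (Perm.mem_support.1 hx)
      (Perm.notMem_support.1 h1) (Perm.notMem_support.1 h2) hcon
  have hR3' : ∀ x ∈ c⁻¹.support, flipBit r2 x ∉ c⁻¹.support →
      flipBit r1 x ∉ c⁻¹.support → flipBit r2 (flipBit r1 x) ∈ c⁻¹.support := by
    simp only [Perm.support_inv]
    intro x hx h2 h1
    rw [flip_comm (Ne.symm hr)]
    exact hR3 x hx h1 h2
  have hstep2 := step1 hr hc hcard3 hR1 hR3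
  set S := c.support with hSdef
  set P2 := S.filter (fun x => flipBit r2 x ∈ S) with hP2def
  have hP2sub : P2 ⊆ S := Finset.filter_subset _ _
  have hP2even : Even P2.card := by
    apply even_card_of_invol (flipBit r2) (flip_flip r2)
    · intro x hx
      rw [hP2def, Finset.mem_filter] at hx ⊢
      exact ⟨hx.2, by rw [Aux35.flip_flip]; exact hx.1⟩
    · intro x _
      exact flip_ne_self r2 x
  have hP2le : P2.card ≤ k := le_trans (Finset.card_le_card hP2sub) (le_of_eq hcard)
  rcases hk with rfl | rfl
  · rw [Nat.even_iff] at hP2even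
    omega
  -- now k = 5
  have hstep1 := step1 (Ne.symm hr) hc.inv
    (by rw [Perm.support_inv]; exact hcard3) hR1' hR3'
  simp only [Perm.support_inv] at hstep1
  set P1 := S.filter (fun x => flipBit r1 x ∈ S) with hP1def
  have hP1sub : P1 ⊆ S := Finset.filter_subset _ _
  have hP1even : Even P1.card := by
    apply even_card_of_invol (flipBit r1) (flip_flip r1)
    · intro x hx
      rw [hP1def, Finset.mem_filter] at hx ⊢
      exact ⟨hx.2, by rw [Aux35.flip_flip]; exact hx.1⟩
    · intro x _
      exact flip_ne_self r1 x
  have hP1le : P1.card ≤ 5 := le_trans (Finset.card_le_card hP1sub) (le_of_eq hcard)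
  have hP1card : P1.card = 4 := by rw [Nat.even_iff] at hP1even; omega
  have hP2card : P2.card = 4 := by rw [Nat.even_iff] at hP2even; omega
  -- extract the uncovered points v1 and v2
  have hv1ex : (S \ P1).card = 1 := by rw [Finset.card_sdiff_of_subset hP1sub]; omega
  have hv2ex : (S \ P2).card = 1 := by rw [Finset.card_sdiff_of_subset hP2sub]; omega
  obtain ⟨v1, hv1eq⟩ := Finset.card_eq_one.1 hv1ex
  obtain ⟨v2, hv2eq⟩ := Finset.card_eq_one.1 hv2ex
  have hv1mem : v1 ∈ S \ P1 := by rw [hv1eq]; exact Finset.mem_singleton_self v1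
  have hv2mem : v2 ∈ S \ P2 := by rw [hv2eq]; exact Finset.mem_singleton_self v2
  have hv1S : v1 ∈ S := (Finset.mem_sdiff.1 hv1mem).1
  have hv2S : v2 ∈ S := (Finset.mem_sdiff.1 hv2mem).1
  have hv1flip : flipBit r1 v1 ∉ S := by
    intro hmem
    exact (Finset.mem_sdiff.1 hv1mem).2 (Finset.mem_filter.2 ⟨hv1S, hmem⟩)
  have hv2flip : flipBit r2 v2 ∉ S := by
    intro hmem
    exact (Finset.mem_sdiff.1 hv2mem).2 (Finset.mem_filter.2 ⟨hv2S, hmem⟩)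
  have hcov1 : ∀ x ∈ S, x ≠ v1 → flipBit r1 x ∈ S := by
    intro x hx hxv
    by_contra hflip
    have hmem : x ∈ S \ P1 := Finset.mem_sdiff.2
      ⟨hx, fun hP => hflip (Finset.mem_filter.1 hP).2⟩
    rw [hv1eq, Finset.mem_singleton] at hmem
    exact hxv hmem
  have hcov2 : ∀ x ∈ S, x ≠ v2 → flipBit r2 x ∈ S := by
    intro x hx hxv
    by_contra hflip
    have hmem : x ∈ S \ P2 := Finset.mem_sdiff.2
      ⟨hx, fun hP => hflip (Finset.mem_filter.1 hP).2⟩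
    rw [hv2eq, Finset.mem_singleton] at hmem
    exact hxv hmem
  -- the odd class S'
  set S' := S.filter (fun x => mask r1 r2 x = mask r1 r2 v1) with hS'def
  have hS'sub : S' ⊆ S := Finset.filter_subset _ _
  have hv1S' : v1 ∈ S' := Finset.mem_filter.2 ⟨hv1S, rfl⟩
  have hEeven : Even ((S'.erase v1).card) := by
    apply even_card_of_invol (flipBit r1) (flip_flip r1)
    · intro x hx
      rw [Finset.mem_erase] at hx ⊢
      obtain ⟨hxv, hxS'⟩ := hx
      rw [hS'def, Finset.mem_filter] at hxS' ⊢
      obtain ⟨hxS, hxm⟩ := hxS'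
      refine ⟨?_, hcov1 x hxS hxv, by rw [mask_flip1]; exact hxm⟩
      intro hcon
      apply hv1flip
      rw [← hcon, Aux35.flip_flip]
      exact hxS
    · intro x _
      exact flip_ne_self r1 x
  have hS'card : (S'.erase v1).card + 1 = S'.card := Finset.card_erase_add_one hv1S'
  have hv2S' : v2 ∈ S' := by
    by_contra hcon
    have : Even S'.card := by
      apply even_card_of_invol (flipBit r2) (flip_flip r2)
      · intro x hx
        rw [hS'def, Finset.mem_filter] at hx ⊢
        obtain ⟨hxS, hxm⟩ := hx
        have hxv : x ≠ v2 := fun h => hcon (h ▸ Finset.mem_filter.2 ⟨hxS, hxm⟩)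
        exact ⟨hcov2 x hxS hxv, by rw [mask_flip2]; exact hxm⟩
      · intro x _
        exact flip_ne_self r2 x
    rw [Nat.even_iff] at this hEeven
    omega
  have hS'le : S'.card ≤ 5 := le_trans (Finset.card_le_card hS'sub) (le_of_eq hcard)
  have hS'cases : S'.card = 1 ∨ S'.card = 3 ∨ S'.card = 5 := by
    rw [Nat.even_iff] at hEeven
    omega
  rcases hS'cases with h1 | h3 | h5
  · -- S' = {v1}, so v2 = v1; use R3 to get a second element of S'
    obtain ⟨a, ha⟩ := Finset.card_eq_one.1 h1
    have hv1a : v1 = a := by rw [ha, Finset.mem_singleton] at hv1S'; exact hv1S'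
    have hv2a : v2 = a := by rw [ha, Finset.mem_singleton] at hv2S'; exact hv2S'
    have hv21 : v2 = v1 := by rw [hv1a, hv2a]
    have hw : flipBit r1 (flipBit r2 v1) ∈ S :=
      hR3 v1 hv1S hv1flip (hv21 ▸ hv2flip)
    have hwS' : flipBit r1 (flipBit r2 v1) ∈ S' := by
      rw [hS'def, Finset.mem_filter]
      exact ⟨hw, by rw [mask_flip1, mask_flip2]⟩
    rw [ha, Finset.mem_singleton, ← hv1a] at hwS'
    have := congrFun hwS' r1
    rw [flip_self, flip_ne hr] at this
    simp at this
  · -- |S'| = 3 : the complement T has two elements but contains three distinct points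
    set T := S \ S' with hTdef
    have hTcard : T.card = 2 := by rw [hTdef, Finset.card_sdiff_of_subset hS'sub]; omega
    have hTne : T.Nonempty := by rw [← Finset.card_pos]; omega
    obtain ⟨y, hyT⟩ := hTne
    obtain ⟨hyS, hyS'⟩ := Finset.mem_sdiff.1 hyT
    have hym : mask r1 r2 y ≠ mask r1 r2 v1 := by
      intro hcon
      exact hyS' (Finset.mem_filter.2 ⟨hyS, hcon⟩)
    have hyv1 : y ≠ v1 := fun h => hyS' (h ▸ hv1S')
    have hyv2 : y ≠ v2 := fun h => hyS' (h ▸ hv2S')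
    have hf1T : flipBit r1 y ∈ T := by
      refine Finset.mem_sdiff.2 ⟨hcov1 y hyS hyv1, ?_⟩
      intro hcon
      exact hym (by rw [← mask_flip1 r1 r2 y]; exact (Finset.mem_filter.1 hcon).2)
    have hf2T : flipBit r2 y ∈ T := by
      refine Finset.mem_sdiff.2 ⟨hcov2 y hyS hyv2, ?_⟩
      intro hcon
      exact hym (by rw [← mask_flip2 r1 r2 y]; exact (Finset.mem_filter.1 hcon).2)
    have hne12 : flipBit r1 y ≠ flipBit r2 y := by
      intro hcon
      have := congrFun hcon r1
      rw [flip_self, flip_ne hr] at this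
      simp at this
    have hins : ({y, flipBit r1 y, flipBit r2 y} : Finset (Fin n → Bool)) ⊆ T := by
      intro z hz
      simp only [Finset.mem_insert, Finset.mem_singleton] at hz
      rcases hz with rfl | rfl | rfl
      · exact hyT
      · exact hf1T
      · exact hf2T
    have hcard3' : ({y, flipBit r1 y, flipBit r2 y} : Finset (Fin n → Bool)).card = 3 := by
      rw [Finset.card_insert_of_notMem
          (by simp [Ne.symm (flip_ne_self r1 y), Ne.symm (flip_ne_self r2 y)]),
        Finset.card_insert_of_notMem (by simp [hne12]),
        Finset.card_singleton]
    have := Finset.card_le_card hins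
    omega
  · -- |S'| = 5 : all five points share a mask; pigeonhole on the two remaining bits
    have hS'eq : S' = S := Finset.eq_of_subset_of_card_le hS'sub (by omega)
    have h4 : ((Finset.univ : Finset (Bool × Bool))).card = 4 := rfl
    have huniv : ((Finset.univ : Finset (Bool × Bool))).card < S.card := by
      omega
    obtain ⟨x, hxS, y, hyS, hxy, hfeq⟩ :=
      Finset.exists_ne_map_eq_of_card_lt_of_maps_to huniv
        (f := fun x => (x r1, x r2)) (fun x _ => Finset.mem_univ _)
    have hxm : mask r1 r2 x = mask r1 r2 v1 :=
      (Finset.mem_filter.1 (hS'eq ▸ hxS : x ∈ S')).2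
    have hym : mask r1 r2 y = mask r1 r2 v1 :=
      (Finset.mem_filter.1 (hS'eq ▸ hyS : y ∈ S')).2
    have h1 : x r1 = y r1 := congrArg Prod.fst hfeq
    have h2 : x r2 = y r2 := congrArg Prod.snd hfeq
    exact hxy (mask_inj (hxm.trans hym.symm) h1 h2)
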